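/- If f : K → ℝ is bounded and g : K → ℝ is β-Hölder continuous on K with 0 < β ≤ 1 and ∑_{s∈S} r_s^β < 1 (i.e. β exceeds the similarity dimension of K), then φ_n(f,g) → 0 as n → ∞; in particular the pair (f,g) is integrable with φ(f,g) = 0. -/
import Mathlib


open Filter Topology

/-- For a word `s = (s_1, …, s_n)` over the alphabet `Fin (N+1)`,
`wmap F s = F s_1 ∘ ⋯ ∘ F s_n`. -/
noncomputable def wmap {N n : ℕ} (F : Fin (N + 1) → ℝ → ℝ) (s : Fin n → Fin (N + 1)) :
    ℝ → ℝ :=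
  (List.ofFn s).foldr (fun i h => F i ∘ h) id

/-- `φ_n(f,g) = ∑_{s ∈ S^n} (f(a_s)+f(b_s))·(g(b_s)−g(a_s))`. -/
noncomputable def phiSeq {N : ℕ} (F : Fin (N + 1) → ℝ → ℝ) (a b : ℝ) (f g : ℝ → ℝ)
    (n : ℕ) : ℝ :=
  ∑ s : Fin n → Fin (N + 1),
    (f (wmap F s a) + f (wmap F s b)) * (g (wmap F s b) - g (wmap F s a))

/-- The self-similar set `K = ⋂_{n ≥ 1} ⋃_{s ∈ S^n} f_s([a,b])`. -/
noncomputable def ssSet {N : ℕ} (F : Fin (N + 1) → ℝ → ℝ) (a b : ℝ) : Set ℝ :=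
  ⋂ n : ℕ, ⋃ s : Fin (n + 1) → Fin (N + 1), wmap F s '' Set.Icc a b

/-- Word maps indexed by lists. -/
noncomputable def wl {N : ℕ} (F : Fin (N + 1) → ℝ → ℝ) (l : List (Fin (N + 1))) : ℝ → ℝ :=
  l.foldr (fun i h => F i ∘ h) id

lemma wmap_eq_wl {N n : ℕ} (F : Fin (N + 1) → ℝ → ℝ) (s : Fin n → Fin (N + 1)) :
    wmap F s = wl F (List.ofFn s) := rfl

lemma wl_nil {N : ℕ} (F : Fin (N + 1) → ℝ → ℝ) (x : ℝ) : wl F [] x = x := rfl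

lemma wl_cons {N : ℕ} (F : Fin (N + 1) → ℝ → ℝ) (i : Fin (N + 1))
    (l : List (Fin (N + 1))) (x : ℝ) : wl F (i :: l) x = F i (wl F l x) := rfl

lemma wl_append {N : ℕ} (F : Fin (N + 1) → ℝ → ℝ) (l₁ l₂ : List (Fin (N + 1))) (x : ℝ) :
    wl F (l₁ ++ l₂) x = wl F l₁ (wl F l₂ x) := by
  induction l₁ with
  | nil => rfl
  | cons i l ih => simp [wl_cons, ih]

lemma exists_ofFn {α : Type*} (u : List α) {k : ℕ} (h : u.length = k) :
    ∃ t : Fin k → α, List.ofFn t = u := by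
  subst h
  exact ⟨u.get, List.ofFn_get u⟩

/-- If `f` is bounded on `K` and `g` is `β`-Hölder on `K` with `0 < β ≤ 1` and
`∑_s r_s^β < 1`, then `φ_n(f,g) → 0`. -/
theorem tendsto_phiSeq_zero_of_bounded_of_holder
    {N : ℕ} (r c : Fin (N + 1) → ℝ)
    (hr0 : ∀ s, 0 < r s) (hr1 : ∀ s, r s < 1)
    (a b : ℝ) (hab : a < b)
    (F : Fin (N + 1) → ℝ → ℝ) (hF : ∀ s x, F s x = r s * x + c s)
    (ha : F 0 a = a) (hb : F (Fin.last N) b = b)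
    (hord : ∀ l : Fin N, F l.castSucc b ≤ F l.succ a)
    (f g : ℝ → ℝ) (β : ℝ) (hβ0 : 0 < β) (hβ1 : β ≤ 1)
    (hbdd : ∃ C : ℝ, ∀ x ∈ ssSet F a b, |f x| ≤ C)
    (hg : ∃ C : ℝ, ∀ x ∈ ssSet F a b, ∀ y ∈ ssSet F a b, |g x - g y| ≤ C * |x - y| ^ β)
    (hdim : ∑ s : Fin (N + 1), r s ^ β < 1) :
    Tendsto (phiSeq F a b f g) atTop (nhds 0) := by
  obtain ⟨Cf, hCf⟩ := hbdd
  obtain ⟨Cg, hCg⟩ := hg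
  -- F s is monotone
  have hFmono : ∀ s : Fin (N + 1), Monotone (F s) := by
    intro s x y hxy
    rw [hF, hF]
    have := mul_le_mul_of_nonneg_left hxy (hr0 s).le
    linarith
  -- a ≤ F s a
  have haF : ∀ s, a ≤ F s a := by
    have hm : Monotone (fun s => F s a) := by
      rw [Fin.monotone_iff_le_succ]
      intro i
      exact le_trans (hFmono _ hab.le) (hord i)
    intro s
    calc a = F 0 a := ha.symm
    _ ≤ F s a := hm (Fin.zero_le s)
  -- F s b ≤ b
  have hbF : ∀ s, F s b ≤ b := by
    have hm : Monotone (fun s => F s b) := by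
      rw [Fin.monotone_iff_le_succ]
      intro i
      exact le_trans (hord i) (hFmono _ hab.le)
    intro s
    calc F s b ≤ F (Fin.last N) b := hm (Fin.le_last s)
    _ = b := hb
  have hmaps : ∀ s, Set.MapsTo (F s) (Set.Icc a b) (Set.Icc a b) := by
    intro s x hx
    exact ⟨le_trans (haF s) (hFmono s hx.1), le_trans (hFmono s hx.2) (hbF s)⟩
  have hwlmaps : ∀ l : List (Fin (N + 1)), Set.MapsTo (wl F l) (Set.Icc a b) (Set.Icc a b) := by
    intro l
    induction l with
    | nil => intro x hx; exact hx
    | cons i l ih => intro x hx; exact hmaps i (ih hx)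
  have hrep : ∀ (j : Fin (N + 1)) (x : ℝ), F j x = x →
      ∀ k : ℕ, wl F (List.replicate k j) x = x := by
    intro j x hj k
    induction k with
    | zero => rfl
    | succ k ih => rw [List.replicate_succ, wl_cons, ih, hj]
  -- membership of iterated endpoints in the self-similar set
  have hmem : ∀ (l : List (Fin (N + 1))) (x : ℝ), x ∈ Set.Icc a b →
      ∀ (j : Fin (N + 1)), F j x = x → wl F l x ∈ ssSet F a b := by
    intro l x hx j hj
    refine Set.mem_iInter.2 fun m => ?_
    by_cases hlen : m + 1 ≤ l.length
    · obtain ⟨t, ht⟩ := exists_ofFn (l.take (m + 1)) (k := m + 1)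
        (by rw [List.length_take]; omega)
      refine Set.mem_iUnion.2 ⟨t, wl F (l.drop (m + 1)) x, hwlmaps _ hx, ?_⟩
      rw [wmap_eq_wl, ht, ← wl_append, List.take_append_drop]
    · obtain ⟨t, ht⟩ := exists_ofFn (l ++ List.replicate (m + 1 - l.length) j) (k := m + 1)
        (by rw [List.length_append, List.length_replicate]; omega)
      refine Set.mem_iUnion.2 ⟨t, x, hx, ?_⟩
      rw [wmap_eq_wl, ht, wl_append, hrep j x hj]
  have haIcc : a ∈ Set.Icc a b := ⟨le_refl a, hab.le⟩
  have hbIcc : b ∈ Set.Icc a b := ⟨hab.le, le_refl b⟩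
  have hamem : ∀ {n : ℕ} (s : Fin n → Fin (N + 1)), wmap F s a ∈ ssSet F a b := by
    intro n s
    rw [wmap_eq_wl]
    exact hmem _ a haIcc 0 ha
  have hbmem : ∀ {n : ℕ} (s : Fin n → Fin (N + 1)), wmap F s b ∈ ssSet F a b := by
    intro n s
    rw [wmap_eq_wl]
    exact hmem _ b hbIcc (Fin.last N) hb
  have haK : a ∈ ssSet F a b := hmem [] a haIcc 0 ha
  have hbK : b ∈ ssSet F a b := hmem [] b hbIcc (Fin.last N) hb
  -- nonnegativity of the constants
  have hCf0 : 0 ≤ Cf := le_trans (abs_nonneg _) (hCf a haK)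
  have hCg0 : 0 ≤ Cg := by
    have h1 := hCg b hbK a haK
    have h2 : (0 : ℝ) < |b - a| ^ β :=
      Real.rpow_pos_of_pos (abs_pos.2 (sub_ne_zero.2 hab.ne')) β
    nlinarith [abs_nonneg (g b - g a)]
  -- the difference of images of endpoints
  have hdiff : ∀ l : List (Fin (N + 1)),
      wl F l b - wl F l a = (l.map r).prod * (b - a) := by
    intro l
    induction l with
    | nil => simp [wl_nil]
    | cons i l ih =>
      rw [wl_cons, wl_cons, hF, hF, List.map_cons, List.prod_cons]
      calc r i * wl F l b + c i - (r i * wl F l a + c i)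
          = r i * (wl F l b - wl F l a) := by ring
        _ = r i * ((l.map r).prod * (b - a)) := by rw [ih]
        _ = r i * (l.map r).prod * (b - a) := by ring
  have hdiff' : ∀ {n : ℕ} (s : Fin n → Fin (N + 1)),
      wmap F s b - wmap F s a = (∏ i, r (s i)) * (b - a) := by
    intro n s
    rw [wmap_eq_wl, hdiff, List.map_ofFn, List.prod_ofFn]
    rfl
  set q : ℝ := ∑ s : Fin (N + 1), r s ^ β with hq
  have hq0 : 0 ≤ q :=
    Finset.sum_nonneg fun s _ => Real.rpow_nonneg (hr0 s).le β
  set D : ℝ := 2 * Cf * (Cg * (b - a) ^ β) with hD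
  have hD0 : 0 ≤ D := by
    have h : (0:ℝ) ≤ (b - a) ^ β := Real.rpow_nonneg (by linarith) β
    have : (0:ℝ) ≤ 2 * Cf := by linarith
    exact mul_nonneg this (mul_nonneg hCg0 h)
  -- the key estimate
  have key : ∀ n : ℕ, |phiSeq F a b f g n| ≤ D * q ^ n := by
    intro n
    have step : ∀ s : Fin n → Fin (N + 1),
        |(f (wmap F s a) + f (wmap F s b)) * (g (wmap F s b) - g (wmap F s a))|
          ≤ D * ∏ i, r (s i) ^ β := by
      intro s
      have hP0 : (0:ℝ) < ∏ i, r (s i) := Finset.prod_pos fun i _ => hr0 (s i)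
      have habs : |wmap F s b - wmap F s a| = (∏ i, r (s i)) * (b - a) := by
        rw [hdiff' s, abs_of_nonneg (mul_nonneg hP0.le (by linarith))]
      have h1 : |f (wmap F s a) + f (wmap F s b)| ≤ 2 * Cf := by
        calc |f (wmap F s a) + f (wmap F s b)|
            ≤ |f (wmap F s a)| + |f (wmap F s b)| := abs_add_le _ _
          _ ≤ Cf + Cf := add_le_add (hCf _ (hamem s)) (hCf _ (hbmem s))
          _ = 2 * Cf := by ring
      have h2 : |g (wmap F s b) - g (wmap F s a)|
          ≤ Cg * ((∏ i, r (s i)) * (b - a)) ^ β := by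
        have := hCg _ (hbmem s) _ (hamem s)
        rwa [habs] at this
      have h3 : ((∏ i, r (s i)) * (b - a)) ^ β
          = (∏ i, r (s i) ^ β) * (b - a) ^ β := by
        rw [Real.mul_rpow hP0.le (by linarith),
          Real.finset_prod_rpow Finset.univ (fun i => r (s i)) (fun i _ => (hr0 (s i)).le) β]
      calc |(f (wmap F s a) + f (wmap F s b)) * (g (wmap F s b) - g (wmap F s a))|
          = |f (wmap F s a) + f (wmap F s b)| * |g (wmap F s b) - g (wmap F s a)| :=
            abs_mul _ _
        _ ≤ (2 * Cf) * (Cg * ((∏ i, r (s i)) * (b - a)) ^ β) := by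
            apply mul_le_mul h1 h2 (abs_nonneg _) (by linarith)
        _ = D * ∏ i, r (s i) ^ β := by rw [h3, hD]; ring
    calc |phiSeq F a b f g n|
        ≤ ∑ s : Fin n → Fin (N + 1),
            |(f (wmap F s a) + f (wmap F s b)) * (g (wmap F s b) - g (wmap F s a))| :=
          Finset.abs_sum_le_sum_abs _ _
      _ ≤ ∑ s : Fin n → Fin (N + 1), D * ∏ i, r (s i) ^ β :=
          Finset.sum_le_sum fun s _ => step s
      _ = D * ∑ s : Fin n → Fin (N + 1), ∏ i, r (s i) ^ β := by
          rw [Finset.mul_sum]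
      _ = D * q ^ n := by
          congr 1
          rw [← Fin.prod_const n q, hq, Finset.prod_univ_sum]
          simp
  have hlim : Tendsto (fun n => D * q ^ n) atTop (nhds 0) := by
    have := (tendsto_pow_atTop_nhds_zero_of_lt_one hq0 hdim).const_mul D
    simpa using this
  exact squeeze_zero_norm (fun n => by simpa [Real.norm_eq_abs] using key n) hlim
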